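/- Let G be a group, B a unital algebra, and let (S, ω) and (S', ω') be factor systems for (G, B) related by an element h ∈ C¹(G, B^×): S'(g) = C_B(h(g)) ∘ S(g) and ω'(g,g') = h(g)·S(g)(h(g'))·ω(g,g')·h(gg')^{-1}. Then the map φ : A_{(S',ω')} → A_{(S,ω)} given on homogeneous elements by φ(b v_g) := b·h(g) v_g is an isomorphism of G-graded unital algebras that is the identity on the degree-1 component B. -/

import Mathlib

/-- Crossed-product multiplication on `⊕_{g ∈ G} B v_g`, modelled on `G →₀ B`. -/
noncomputable def cpMul {G : Type*} [Group G] {B : Type*} [Ring B]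
    (S : G → (B ≃+* B)) (ω : G → G → Bˣ) :
    (G →₀ B) → (G →₀ B) → (G →₀ B) := fun f₁ f₂ =>
  f₁.sum fun g b => f₂.sum fun g' b' =>
    Finsupp.single (g * g') (b * S g b' * (ω g g' : B))

section Aux
variable {G : Type*} [Group G] {B : Type*} [Ring B]
  (S : G → (B ≃+* B)) (ω : G → G → Bˣ)

lemma cpMul_single_single (g g' : G) (b b' : B) :
    cpMul S ω (Finsupp.single g b) (Finsupp.single g' b') =
      Finsupp.single (g * g') (b * S g b' * (ω g g' : B)) := by
  unfold cpMul
  rw [Finsupp.sum_single_index, Finsupp.sum_single_index]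
  · simp
  · simp

lemma cpMul_add_left (x y z : G →₀ B) :
    cpMul S ω (x + y) z = cpMul S ω x z + cpMul S ω y z := by
  unfold cpMul
  apply Finsupp.sum_add_index' <;> intros <;>
    simp [add_mul, Finsupp.single_add, Finsupp.sum_add]

lemma cpMul_add_right (x y z : G →₀ B) :
    cpMul S ω x (y + z) = cpMul S ω x y + cpMul S ω x z := by
  unfold cpMul
  rw [← Finsupp.sum_add]
  apply Finsupp.sum_congr
  intro g _
  apply Finsupp.sum_add_index' <;> intros <;>
    simp [mul_add, add_mul, Finsupp.single_add]

lemma cpMul_zero_left (z : G →₀ B) : cpMul S ω 0 z = 0 := by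
  unfold cpMul; simp

lemma cpMul_zero_right (z : G →₀ B) : cpMul S ω z 0 = 0 := by
  unfold cpMul; simp

end Aux

/-- Let `(S, ω)` and `(S', ω')` be factor systems for `(G, B)`
related by `h ∈ C¹(G, Bˣ)`: `S'(g) = C_B(h(g)) ∘ S(g)` and
`ω'(g,g') = h(g)·S(g)(h(g'))·ω(g,g')·h(gg')⁻¹`.  Then the map
`φ : A_{(S',ω')} → A_{(S,ω)}`, `b v_g ↦ b·h(g) v_g`, is an isomorphism of `G`-graded
unital algebras which is the identity on the degree-one component `B`. -/
theorem stmt16 (G : Type*) [Group G] (B : Type*) [Ring B]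
    (S S' : G → (B ≃+* B)) (ω ω' : G → G → Bˣ)
    (hS1 : S 1 = RingEquiv.refl B) (hS'1 : S' 1 = RingEquiv.refl B)
    (hω1 : ∀ g, ω g 1 = 1) (hω1' : ∀ g, ω 1 g = 1)
    (hω'1 : ∀ g, ω' g 1 = 1) (hω'1' : ∀ g, ω' 1 g = 1)
    (hδ : ∀ g g' b, S g (S g' b) = (ω g g' : B) * S (g * g') b * ((ω g g')⁻¹ : Bˣ))
    (hδ' : ∀ g g' b,
      S' g (S' g' b) = (ω' g g' : B) * S' (g * g') b * ((ω' g g')⁻¹ : Bˣ))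
    (hcoc : ∀ g g' g'',
      (S g (ω g' g'') : B) * (ω g (g' * g'') : B) = (ω g g' : B) * (ω (g * g') g'' : B))
    (hcoc' : ∀ g g' g'',
      (S' g (ω' g' g'') : B) * (ω' g (g' * g'') : B) =
        (ω' g g' : B) * (ω' (g * g') g'' : B))
    (h : G → Bˣ) (hh1 : h 1 = 1)
    (hrelS : ∀ g x, S' g x = (h g : B) * S g x * ((h g)⁻¹ : Bˣ))
    (hrelω : ∀ g g', (ω' g g' : B) =
      (h g : B) * S g (h g') * (ω g g' : B) * ((h (g * g'))⁻¹ : Bˣ))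
    (φ : (G →₀ B) → (G →₀ B))
    (hφ : ∀ f : G →₀ B, φ f = f.sum fun g b => Finsupp.single g (b * (h g : B))) :
    Function.Bijective φ ∧
    (∀ x y : G →₀ B, φ (x + y) = φ x + φ y) ∧
    (∀ x y : G →₀ B, φ (cpMul S' ω' x y) = cpMul S ω (φ x) (φ y)) ∧
    (∀ (g : G) (b : B), φ (Finsupp.single g b) = Finsupp.single g (b * (h g : B))) ∧
    (∀ b : B, φ (Finsupp.single 1 b) = Finsupp.single 1 b) := by
  have hφadd : ∀ x y : G →₀ B, φ (x + y) = φ x + φ y := by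
    intro x y
    rw [hφ, hφ, hφ]
    apply Finsupp.sum_add_index' <;> intros <;> simp [add_mul, Finsupp.single_add]
  have hφ0 : φ 0 = 0 := by rw [hφ]; simp
  have hφs : ∀ (g : G) (b : B), φ (Finsupp.single g b) = Finsupp.single g (b * (h g : B)) := by
    intro g b
    rw [hφ, Finsupp.sum_single_index]
    simp
  -- the inverse map
  set ψ : (G →₀ B) → (G →₀ B) :=
    fun f => f.sum fun g b => Finsupp.single g (b * ((h g)⁻¹ : Bˣ)) with hψdef
  have hψadd : ∀ x y : G →₀ B, ψ (x + y) = ψ x + ψ y := by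
    intro x y
    apply Finsupp.sum_add_index' <;> intros <;> simp [add_mul, Finsupp.single_add]
  have hψs : ∀ (g : G) (b : B), ψ (Finsupp.single g b) =
      Finsupp.single g (b * ((h g)⁻¹ : Bˣ)) := by
    intro g b
    rw [hψdef]
    dsimp only
    rw [Finsupp.sum_single_index]
    simp
  have hli : Function.LeftInverse ψ φ := by
    intro f
    induction f using Finsupp.induction_linear with
    | zero => rw [hφ0]; simp [hψdef]
    | add a b ha hb => rw [hφadd, hψadd, ha, hb]
    | single g b => rw [hφs, hψs, mul_assoc, Units.mul_inv, mul_one]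
  have hri : Function.RightInverse ψ φ := by
    intro f
    induction f using Finsupp.induction_linear with
    | zero => simp [hψdef, hφ0]
    | add a b ha hb => rw [hψadd, hφadd, ha, hb]
    | single g b => rw [hψs, hφs, mul_assoc, Units.inv_mul, mul_one]
  refine ⟨⟨hli.injective, hri.surjective⟩, hφadd, ?_, hφs, ?_⟩
  · intro x y
    induction x using Finsupp.induction_linear with
    | zero => simp [hφ0, cpMul_zero_left]
    | add a b ha hb => rw [cpMul_add_left, hφadd, ha, hb, hφadd, cpMul_add_left]
    | single g b =>
      induction y using Finsupp.induction_linear with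
      | zero => simp [hφ0, cpMul_zero_right]
      | add a c ha hc => rw [cpMul_add_right, hφadd, ha, hc, hφadd, cpMul_add_right]
      | single g' b' =>
        rw [cpMul_single_single, hφs, hφs, hφs, cpMul_single_single]
        congr 1
        rw [hrelS, hrelω, map_mul]
        simp only [mul_assoc, Units.inv_mul_cancel_left]
        rw [Units.inv_mul, mul_one]
  · intro b
    rw [hφs, hh1, Units.val_one, mul_one]
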